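/- arXiv:1302.4200 — 12 statements merged into one kernel-verified Lean document; each statement's English description precedes it below -/
import Mathlib

section
/- Let P be a topological property such that (a) every space with P is m_i (has a closure-preserving local base/quasi-base/cushioned local pairbase at every point), and (b) if X has P and A is a closed subspace, then the quotient X/A (collapsing A to a point) has P. Then every space X with property P is s-m_i, i.e., has the corresponding closure-preserving local structure at every closed set. -/
open Set Topology Cardinal

universe u

/-- A family of sets is closure-preserving if the closure of the union of any
subfamily equals the union of the closures. -/
def ClosurePreserving {X : Type*} [TopologicalSpace X] (P : Set (Set X)) : Prop :=
  ∀ P' ⊆ P, closure (⋃₀ P') = ⋃ B ∈ P', closure B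

/-- A family of open sets is a neighborhood base at the set `F`. -/
def IsNbhdBaseAt {X : Type*} [TopologicalSpace X] (B : Set (Set X)) (F : Set X) : Prop :=
  (∀ V ∈ B, IsOpen V ∧ F ⊆ V) ∧ ∀ U : Set X, IsOpen U → F ⊆ U → ∃ V ∈ B, V ⊆ U

/-- `X` is s-m₁: every closed set has a closure-preserving open neighborhood base. -/
def SM1 (X : Type*) [TopologicalSpace X] : Prop :=
  ∀ F : Set X, IsClosed F → ∃ B : Set (Set X), IsNbhdBaseAt B F ∧ ClosurePreserving B

/-- `X` is m₁ at `x`: there is a closure-preserving local base of open sets at `x`. -/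
def M1At {X : Type*} [TopologicalSpace X] (x : X) : Prop :=
  ∃ B : Set (Set X), (∀ V ∈ B, IsOpen V ∧ x ∈ V) ∧
    (∀ U : Set X, IsOpen U → x ∈ U → ∃ V ∈ B, V ⊆ U) ∧ ClosurePreserving B

/-- `X` is m₂ at `x`: a closure-preserving local quasi-base at `x`. -/
def M2At {X : Type*} [TopologicalSpace X] (x : X) : Prop :=
  ∃ Q : Set (Set X), (∀ B ∈ Q, x ∈ interior B) ∧
    (∀ U : Set X, IsOpen U → x ∈ U → ∃ B ∈ Q, B ⊆ U) ∧ ClosurePreserving Q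

/-- A family of pairs is cushioned. -/
def Cushioned {X : Type*} [TopologicalSpace X] (P : Set (Set X × Set X)) : Prop :=
  ∀ P' ⊆ P, closure (⋃ p ∈ P', p.1) ⊆ ⋃ p ∈ P', p.2

/-- `X` is m₃ at `x`: a cushioned local pairbase at `x`. -/
def M3At {X : Type*} [TopologicalSpace X] (x : X) : Prop :=
  ∃ P : Set (Set X × Set X), (∀ p ∈ P, IsOpen p.1 ∧ x ∈ p.1 ∧ p.1 ⊆ p.2) ∧
    (∀ U : Set X, IsOpen U → x ∈ U → ∃ p ∈ P, p.2 ⊆ U) ∧ Cushioned P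

/-- `X` is s-m₂: every closed set has a closure-preserving local quasi-base. -/
def SM2 (X : Type*) [TopologicalSpace X] : Prop :=
  ∀ F : Set X, IsClosed F → ∃ Q : Set (Set X), (∀ B ∈ Q, F ⊆ interior B) ∧
    (∀ U : Set X, IsOpen U → F ⊆ U → ∃ B ∈ Q, B ⊆ U) ∧ ClosurePreserving Q

/-- `X` is s-m₃: every closed set has a cushioned local pairbase. -/
def SM3 (X : Type*) [TopologicalSpace X] : Prop :=
  ∀ F : Set X, IsClosed F → ∃ P : Set (Set X × Set X),
    (∀ p ∈ P, IsOpen p.1 ∧ F ⊆ p.1 ∧ p.1 ⊆ p.2) ∧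
    (∀ U : Set X, IsOpen U → F ⊆ U → ∃ p ∈ P, p.2 ⊆ U) ∧ Cushioned P

/-- The setoid on `X` identifying all points of `A` to one point. -/
def collapseSetoid {X : Type*} (A : Set X) : Setoid X where
  r x y := x = y ∨ (x ∈ A ∧ y ∈ A)
  iseqv := ⟨fun _ => Or.inl rfl, by tauto, by
    rintro x y z (rfl | ⟨hx, hy⟩) (rfl | ⟨hy', hz⟩) <;> tauto⟩


section CollapseHelpers

variable {X : Type u} [TopologicalSpace X] {A : Set X}

lemma collapse_eq_iff {x y : X} :
    Quotient.mk (collapseSetoid A) x = Quotient.mk (collapseSetoid A) y ↔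
      (x = y ∨ (x ∈ A ∧ y ∈ A)) :=
  ⟨fun h => Quotient.exact h, fun h => Quotient.sound h⟩

lemma collapse_preimage_image [TopologicalSpace X] {U : Set X}
    (h : A ⊆ U ∨ U ∩ A = ∅) :
    Quotient.mk (collapseSetoid A) ⁻¹' (Quotient.mk (collapseSetoid A) '' U) = U := by
  ext x
  simp only [Set.mem_preimage, Set.mem_image]
  constructor
  · rintro ⟨u, hu, he⟩
    rcases collapse_eq_iff.mp he with rfl | ⟨huA, hxA⟩
    · exact hu
    · rcases h with h | h
      · exact h hxA
      · exact absurd (Set.mem_inter hu huA) (by simp [h])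
  · exact fun hx => ⟨x, hx, rfl⟩

lemma collapse_isOpen_image {U : Set X} (hU : IsOpen U) (h : A ⊆ U ∨ U ∩ A = ∅) :
    IsOpen (Quotient.mk (collapseSetoid A) '' U) := by
  rw [isOpen_coinduced (f := Quotient.mk (collapseSetoid A)), collapse_preimage_image h]
  exact hU

lemma collapse_mk_mem_of_mem {V : Set (Quotient (collapseSetoid A))} {x₀ : X}
    (hx₀ : x₀ ∈ A) (hV : Quotient.mk (collapseSetoid A) x₀ ∈ V) :
    A ⊆ Quotient.mk (collapseSetoid A) ⁻¹' V := by
  intro a ha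
  have : Quotient.mk (collapseSetoid A) a = Quotient.mk (collapseSetoid A) x₀ :=
    Quotient.sound (Or.inr ⟨ha, hx₀⟩)
  rw [Set.mem_preimage, this]
  exact hV

lemma collapse_preimage_closure (hA : IsClosed A) {S : Set (Quotient (collapseSetoid A))}
    (hS : A ⊆ Quotient.mk (collapseSetoid A) ⁻¹' S) :
    Quotient.mk (collapseSetoid A) ⁻¹' closure S ⊆
      closure (Quotient.mk (collapseSetoid A) ⁻¹' S) := by
  intro x hx
  by_cases hxA : x ∈ A
  · exact subset_closure (hS hxA)
  · rw [mem_closure_iff]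
    intro o ho hxo
    have ho' : IsOpen (o \ A) := ho.sdiff hA
    have himg : IsOpen (Quotient.mk (collapseSetoid A) '' (o \ A)) :=
      collapse_isOpen_image ho' (Or.inr (Set.diff_inter_self))
    have hmem : Quotient.mk (collapseSetoid A) x ∈ Quotient.mk (collapseSetoid A) '' (o \ A) :=
      ⟨x, ⟨hxo, hxA⟩, rfl⟩
    rcases mem_closure_iff.mp hx _ himg hmem with ⟨y, ⟨u, hu, rfl⟩, hyS⟩
    exact ⟨u, hu.1, hyS⟩

lemma biUnion_closure_subset_closure_sUnion {P' : Set (Set X)} :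
    (⋃ B ∈ P', closure B) ⊆ closure (⋃₀ P') :=
  Set.iUnion₂_subset fun B hB => closure_mono (Set.subset_sUnion_of_mem hB)

lemma closurePreserving_collapse_pullback (hA : IsClosed A)
    {B : Set (Set (Quotient (collapseSetoid A)))}
    (hq : ∀ V ∈ B, A ⊆ Quotient.mk (collapseSetoid A) ⁻¹' V)
    (hcp : ClosurePreserving B) :
    ClosurePreserving ((fun V => Quotient.mk (collapseSetoid A) ⁻¹' V) '' B) := by
  intro P' hP'
  apply subset_antisymm _ biUnion_closure_subset_closure_sUnion
  have hcont : Continuous (Quotient.mk (collapseSetoid A)) := continuous_quot_mk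
  set π : X → Quotient (collapseSetoid A) := Quotient.mk (collapseSetoid A) with hπ
  set B'' : Set (Set (Quotient (collapseSetoid A))) := {V ∈ B | π ⁻¹' V ∈ P'} with hB''
  have hUeq : ⋃₀ P' = π ⁻¹' ⋃₀ B'' := by
    ext x
    simp only [Set.mem_sUnion, Set.mem_preimage]
    constructor
    · rintro ⟨S, hS, hxS⟩
      rcases hP' hS with ⟨V, hV, rfl⟩
      exact ⟨V, ⟨hV, hS⟩, hxS⟩
    · rintro ⟨V, ⟨hVB, hVP⟩, hxV⟩
      exact ⟨π ⁻¹' V, hVP, hxV⟩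
  rw [hUeq]
  calc closure (π ⁻¹' ⋃₀ B'')
      ⊆ π ⁻¹' closure (⋃₀ B'') := hcont.closure_preimage_subset _
    _ = π ⁻¹' ⋃ V ∈ B'', closure V := by rw [hcp B'' (fun V hV => hV.1)]
    _ = ⋃ V ∈ B'', π ⁻¹' closure V := by simp only [Set.preimage_iUnion]
    _ ⊆ ⋃ S ∈ P', closure S := by
        refine Set.iUnion₂_subset fun V hV => ?_
        exact (collapse_preimage_closure hA (hq V hV.1)).trans
          (Set.subset_biUnion_of_mem (u := fun S => closure S) hV.2)

lemma closurePreserving_singleton_empty :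
    ClosurePreserving ({(∅ : Set X)} : Set (Set X)) := by
  intro P' hP'
  have h0 : ⋃₀ P' = ∅ := by
    refine subset_antisymm (Set.sUnion_subset fun B hB => ?_) (Set.empty_subset _)
    rw [Set.mem_singleton_iff.mp (hP' hB)]
  rw [h0, closure_empty]
  refine (subset_antisymm (Set.empty_subset _) (Set.iUnion₂_subset fun B hB => ?_))
  have hB0 : B = ∅ := hP' hB
  simp [hB0]

end CollapseHelpers

/-- If a topological property `P` (a) implies being an `mᵢ`-space and (b) is preserved by
collapsing a closed set to a point, then every space with `P` is an `s`-`mᵢ`-space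
(for `i = 1, 2, 3`). -/
theorem property_preserved_by_quotients_gives_s_version
    {P : (Y : Type u) → [TopologicalSpace Y] → Prop}
    (hb : ∀ (Y : Type u) [TopologicalSpace Y] (A : Set Y), IsClosed A → P Y →
      P (Quotient (collapseSetoid A)))
    (X : Type u) [TopologicalSpace X] (hX : P X) :
    ((∀ (Y : Type u) [TopologicalSpace Y], P Y → ∀ y : Y, M1At y) → SM1 X) ∧
    ((∀ (Y : Type u) [TopologicalSpace Y], P Y → ∀ y : Y, M2At y) → SM2 X) ∧
    ((∀ (Y : Type u) [TopologicalSpace Y], P Y → ∀ y : Y, M3At y) → SM3 X) := by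
  refine ⟨?_, ?_, ?_⟩
  -- Part 1: m₁
  · intro hm F hF
    rcases F.eq_empty_or_nonempty with rfl | ⟨x₀, hx₀⟩
    · refine ⟨{∅}, ⟨?_, ?_⟩, closurePreserving_singleton_empty⟩
      · intro V hV
        rw [Set.mem_singleton_iff.mp hV]
        exact ⟨isOpen_empty, subset_rfl⟩
      · exact fun U hU _ => ⟨∅, rfl, Set.empty_subset U⟩
    · have hPQ := hb X F hF hX
      set π : X → Quotient (collapseSetoid F) := Quotient.mk (collapseSetoid F) with hπ
      have hcont : Continuous π := continuous_quot_mk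
      obtain ⟨B, hB1, hB2, hB3⟩ := hm _ hPQ (π x₀)
      have hqmem : ∀ V ∈ B, F ⊆ π ⁻¹' V := fun V hV =>
        collapse_mk_mem_of_mem hx₀ (hB1 V hV).2
      refine ⟨(fun V => π ⁻¹' V) '' B, ⟨?_, ?_⟩,
        closurePreserving_collapse_pullback hF hqmem hB3⟩
      · rintro _ ⟨V, hV, rfl⟩
        exact ⟨(hB1 V hV).1.preimage hcont, hqmem V hV⟩
      · intro U hU hFU
        have himg : IsOpen (π '' U) := collapse_isOpen_image hU (Or.inl hFU)
        obtain ⟨V, hV, hVsub⟩ := hB2 _ himg ⟨x₀, hFU hx₀, rfl⟩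
        refine ⟨π ⁻¹' V, ⟨V, hV, rfl⟩, ?_⟩
        calc π ⁻¹' V ⊆ π ⁻¹' (π '' U) := Set.preimage_mono hVsub
          _ = U := collapse_preimage_image (Or.inl hFU)
  -- Part 2: m₂
  · intro hm F hF
    rcases F.eq_empty_or_nonempty with rfl | ⟨x₀, hx₀⟩
    · refine ⟨{∅}, ?_, ?_, closurePreserving_singleton_empty⟩
      · exact fun B _ => Set.empty_subset _
      · exact fun U hU _ => ⟨∅, rfl, Set.empty_subset U⟩
    · have hPQ := hb X F hF hX
      set π : X → Quotient (collapseSetoid F) := Quotient.mk (collapseSetoid F) with hπ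
      have hcont : Continuous π := continuous_quot_mk
      obtain ⟨Q, hQ1, hQ2, hQ3⟩ := hm _ hPQ (π x₀)
      have hqmem : ∀ V ∈ Q, F ⊆ π ⁻¹' V := fun V hV =>
        collapse_mk_mem_of_mem hx₀ (interior_subset (hQ1 V hV))
      refine ⟨(fun V => π ⁻¹' V) '' Q, ?_, ?_,
        closurePreserving_collapse_pullback hF hqmem hQ3⟩
      · rintro _ ⟨V, hV, rfl⟩
        have h1 : F ⊆ π ⁻¹' interior V :=
          collapse_mk_mem_of_mem hx₀ (hQ1 V hV)
        exact h1.trans (interior_maximal (Set.preimage_mono interior_subset)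
          (isOpen_interior.preimage hcont))
      · intro U hU hFU
        have himg : IsOpen (π '' U) := collapse_isOpen_image hU (Or.inl hFU)
        obtain ⟨V, hV, hVsub⟩ := hQ2 _ himg ⟨x₀, hFU hx₀, rfl⟩
        refine ⟨π ⁻¹' V, ⟨V, hV, rfl⟩, ?_⟩
        calc π ⁻¹' V ⊆ π ⁻¹' (π '' U) := Set.preimage_mono hVsub
          _ = U := collapse_preimage_image (Or.inl hFU)
  -- Part 3: m₃
  · intro hm F hF
    rcases F.eq_empty_or_nonempty with rfl | ⟨x₀, hx₀⟩
    · refine ⟨{(∅, ∅)}, ?_, ?_, ?_⟩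
      · intro p hp
        rw [Set.mem_singleton_iff.mp hp]
        exact ⟨isOpen_empty, subset_rfl, subset_rfl⟩
      · exact fun U hU _ => ⟨(∅, ∅), rfl, Set.empty_subset U⟩
      · intro P' hP'
        have h0 : (⋃ p ∈ P', p.1) = (∅ : Set X) := by
          refine subset_antisymm (Set.iUnion₂_subset fun p hp => ?_) (Set.empty_subset _)
          rw [Set.mem_singleton_iff.mp (hP' hp)]
        rw [h0, closure_empty]
        exact Set.empty_subset _
    · have hPQ := hb X F hF hX
      set π : X → Quotient (collapseSetoid F) := Quotient.mk (collapseSetoid F) with hπ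
      have hcont : Continuous π := continuous_quot_mk
      obtain ⟨Pb, hP1, hP2, hP3⟩ := hm _ hPQ (π x₀)
      refine ⟨(fun p => (π ⁻¹' p.1, π ⁻¹' p.2)) '' Pb, ?_, ?_, ?_⟩
      · rintro _ ⟨p, hp, rfl⟩
        exact ⟨(hP1 p hp).1.preimage hcont,
          collapse_mk_mem_of_mem hx₀ (hP1 p hp).2.1,
          Set.preimage_mono (hP1 p hp).2.2⟩
      · intro U hU hFU
        have himg : IsOpen (π '' U) := collapse_isOpen_image hU (Or.inl hFU)
        obtain ⟨p, hp, hpsub⟩ := hP2 _ himg ⟨x₀, hFU hx₀, rfl⟩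
        refine ⟨(π ⁻¹' p.1, π ⁻¹' p.2), ⟨p, hp, rfl⟩, ?_⟩
        calc π ⁻¹' p.2 ⊆ π ⁻¹' (π '' U) := Set.preimage_mono hpsub
          _ = U := collapse_preimage_image (Or.inl hFU)
      · intro P' hP'
        set Pb'' : Set (Set (Quotient (collapseSetoid F)) × Set (Quotient (collapseSetoid F))) :=
          {p ∈ Pb | (π ⁻¹' p.1, π ⁻¹' p.2) ∈ P'} with hPb''
        have hU1 : (⋃ p ∈ P', p.1) = π ⁻¹' ⋃ p ∈ Pb'', p.1 := by
          ext x
          simp only [Set.mem_iUnion, Set.mem_preimage, exists_prop]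
          constructor
          · rintro ⟨q, hq, hxq⟩
            rcases hP' hq with ⟨p, hp, rfl⟩
            exact ⟨p, ⟨hp, hq⟩, hxq⟩
          · rintro ⟨p, ⟨hpPb, hpP'⟩, hxp⟩
            exact ⟨(π ⁻¹' p.1, π ⁻¹' p.2), hpP', hxp⟩
        rw [hU1]
        calc closure (π ⁻¹' ⋃ p ∈ Pb'', p.1)
            ⊆ π ⁻¹' closure (⋃ p ∈ Pb'', p.1) := hcont.closure_preimage_subset _
          _ ⊆ π ⁻¹' ⋃ p ∈ Pb'', p.2 :=
              Set.preimage_mono (hP3 Pb'' (fun p hp => hp.1))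
          _ = ⋃ p ∈ Pb'', π ⁻¹' p.2 := by simp only [Set.preimage_iUnion]
          _ ⊆ ⋃ q ∈ P', q.2 := Set.iUnion₂_subset fun p hp =>
              Set.subset_biUnion_of_mem (u := fun q => q.2) hp.2
end

section
/- Every T₁ regular topological space with only finitely many non-isolated points is an s-m₁-space: every closed subset F has a closure-preserving family of open sets forming a neighborhood base at F. -/
open Set Topology Cardinal

universe u

/-- Every T₁ regular space with only finitely many non-isolated points is an s-m₁-space. -/
theorem finitely_many_nonisolated_implies_sM1 {X : Type*} [TopologicalSpace X]
    [T1Space X] [RegularSpace X]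
    (hfin : {x : X | ¬ IsOpen ({x} : Set X)}.Finite) : SM1 X := by
  classical
  intro F hF
  set D := {x : X | ¬ IsOpen ({x} : Set X)} with hD
  -- isolated points in a closure are in the set
  have hiso : ∀ (A : Set X) (x : X), x ∉ D → x ∈ closure A → x ∈ A := by
    intro A x hx hxA
    have hx' : IsOpen ({x} : Set X) := not_not.mp hx
    obtain ⟨y, hy1, hy2⟩ := mem_closure_iff.mp hxA {x} hx' rfl
    rwa [show y = x from mem_singleton_iff.mp hy1] at hy2
  -- regular separation
  have key : ∀ d : X, ∃ W : Set X,
      IsOpen W ∧ (d ∉ F → (F ∪ (D \ {d}) ⊆ W ∧ d ∉ closure W)) := by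
    intro d
    by_cases hd : d ∈ F
    · exact ⟨univ, isOpen_univ, fun h => absurd hd h⟩
    · have hC : IsClosed (F ∪ (D \ {d})) :=
        hF.union ((hfin.subset diff_subset).isClosed)
      have hdC : d ∉ F ∪ (D \ {d}) := by
        rintro (h | h)
        · exact hd h
        · exact h.2 rfl
      have hmem : (F ∪ (D \ {d}))ᶜ ∈ 𝓝 d := hC.isOpen_compl.mem_nhds hdC
      obtain ⟨K, hK, hKc, hKsub⟩ := exists_mem_nhds_isClosed_subset hmem
      refine ⟨Kᶜ, hKc.isOpen_compl, fun _ => ⟨?_, ?_⟩⟩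
      · intro y hy hyK
        exact hKsub hyK hy
      · intro hcl
        obtain ⟨y, hy1, hy2⟩ := mem_closure_iff.mp hcl (interior K) isOpen_interior
          (mem_interior_iff_mem_nhds.mpr hK)
        exact hy2 (interior_subset hy1)
  choose W hWo hWp using key
  set G : Set X → Set X := fun S => ⋂ d ∈ D \ S, W d with hG
  set B : Set (Set X) :=
    {V : Set X | ∃ S : Set X, S ⊆ D ∧ IsOpen V ∧ F ∪ S ⊆ V ∧ V ⊆ G S ∪ S} with hB
  -- unions of subfamilies of B are closed
  have hBclosed : ∀ P' ⊆ B, closure (⋃₀ P') ⊆ ⋃₀ P' := by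
    intro P' hP' x hx
    by_cases hxD : x ∈ D
    · by_contra hxU
      have hxF : x ∉ F := by
        intro hxF
        have hne : (⋃₀ P').Nonempty := by
          rcases eq_empty_or_nonempty (⋃₀ P') with h | h
          · rw [h, closure_empty] at hx; exact absurd hx (notMem_empty x)
          · exact h
        obtain ⟨y, V, hVP, hyV⟩ := hne
        obtain ⟨S, hSD, hVo, hFS, hVG⟩ := hP' hVP
        exact hxU ⟨V, hVP, hFS (Or.inl hxF)⟩
      have hsub : ⋃₀ P' ⊆ W x ∪ (D \ {x}) := by
        rintro y ⟨V, hVP, hyV⟩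
        obtain ⟨S, hSD, hVo, hFS, hVG⟩ := hP' hVP
        have hxS : x ∉ S := fun h => hxU ⟨V, hVP, hFS (Or.inr h)⟩
        rcases hVG hyV with hyG | hyS
        · exact Or.inl (mem_iInter₂.mp hyG x ⟨hxD, hxS⟩)
        · exact Or.inr ⟨hSD hyS, fun h => hxS (mem_singleton_iff.mp h ▸ hyS)⟩
      have h1 : closure (⋃₀ P') ⊆ closure (W x) ∪ (D \ {x}) := by
        calc closure (⋃₀ P') ⊆ closure (W x ∪ (D \ {x})) := closure_mono hsub
          _ = closure (W x) ∪ closure (D \ {x}) := closure_union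
          _ = closure (W x) ∪ (D \ {x}) := by
              rw [((hfin.subset diff_subset).isClosed).closure_eq]
      rcases h1 hx with h | h
      · exact (hWp x hxF).2 h
      · exact h.2 rfl
    · obtain ⟨V, hVP, hxV⟩ := hiso (⋃₀ P') x hxD hx
      exact ⟨V, hVP, hxV⟩
  refine ⟨B, ⟨?_, ?_⟩, ?_⟩
  · rintro V ⟨S, hSD, hVo, hFS, hVG⟩
    exact ⟨hVo, fun y hy => hFS (Or.inl hy)⟩
  · intro U hU hFU
    have hGopen : IsOpen (G (D ∩ U)) :=
      (hfin.subset diff_subset).isOpen_biInter fun d _ => hWo d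
    refine ⟨U ∩ G (D ∩ U), ⟨D ∩ U, inter_subset_left, hU.inter hGopen, ?_, ?_⟩,
      inter_subset_left⟩
    · rintro y (hy | hy)
      · refine ⟨hFU hy, mem_iInter₂.mpr fun d hd => ?_⟩
        have hdF : d ∉ F := fun h => hd.2 ⟨hd.1, hFU h⟩
        exact (hWp d hdF).1 (Or.inl hy)
      · refine ⟨hy.2, mem_iInter₂.mpr fun d hd => ?_⟩
        have hdF : d ∉ F := fun h => hd.2 ⟨hd.1, hFU h⟩
        have hdU : d ∉ U := fun h => hd.2 ⟨hd.1, h⟩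
        exact (hWp d hdF).1
          (Or.inr ⟨hy.1, fun h => hdU (mem_singleton_iff.mp h ▸ hy.2)⟩)
    · exact fun y hy => Or.inl hy.2
  · intro P' hP'
    apply subset_antisymm
    · intro x hx
      obtain ⟨V, hVP, hxV⟩ := hBclosed P' hP' hx
      exact mem_biUnion hVP (subset_closure hxV)
    · exact iUnion₂_subset fun V hV => closure_mono (subset_sUnion_of_mem hV)
end

section
/- Let f : X → Y be a continuous surjective map that is both quasi-open and closed. If ℬ is a closure-preserving family of open subsets of X, then the family {int(f(B)) : B ∈ ℬ} is a closure-preserving family of open subsets of Y. -/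
open Set Topology Cardinal

universe u

/-- If `f` is a continuous, surjective, quasi-open, closed map and `B` is a
closure-preserving family of open sets of `X`, then `{int (f '' V) | V ∈ B}` is a
closure-preserving family of open sets of `Y`. -/
theorem quasiOpen_closed_image_closurePreserving {X Y : Type*}
    [TopologicalSpace X] [TopologicalSpace Y] (f : X → Y)
    (hc : Continuous f) (hs : Function.Surjective f)
    (hqo : ∀ U : Set X, IsOpen U → U.Nonempty → (interior (f '' U)).Nonempty)
    (hcl : IsClosedMap f)
    (B : Set (Set X)) (hopen : ∀ V ∈ B, IsOpen V) (hcp : ClosurePreserving B) :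
    (∀ W ∈ (fun V => interior (f '' V)) '' B, IsOpen W) ∧
    ClosurePreserving ((fun V => interior (f '' V)) '' B) := by
  -- key lemma: for open V, f '' closure V ⊆ closure (interior (f '' V))
  have key : ∀ V : Set X, IsOpen V → f '' closure V ⊆ closure (interior (f '' V)) := by
    rintro V hV y ⟨x, hx, rfl⟩
    rw [mem_closure_iff]
    intro W hW hyW
    have hpre : IsOpen (f ⁻¹' W) := hW.preimage hc
    have hne : (f ⁻¹' W ∩ V).Nonempty := by
      have := (mem_closure_iff.mp hx) (f ⁻¹' W) hpre hyW
      exact this.imp fun z hz => ⟨hz.1, hz.2⟩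
    obtain ⟨z, hz⟩ := hqo _ (hpre.inter hV) hne
    refine ⟨z, ?_, ?_⟩
    · have : z ∈ f '' (f ⁻¹' W ∩ V) := interior_subset hz
      obtain ⟨w, hw, rfl⟩ := this
      exact hw.1
    · refine interior_maximal ?_ isOpen_interior hz
      exact interior_subset.trans (image_mono (f := f) (inter_subset_right))
  constructor
  · rintro W ⟨V, _, rfl⟩
    exact isOpen_interior
  · intro P' hP'
    apply Subset.antisymm
    · -- closure (⋃₀ P') ⊆ ⋃ closures
      set B' : Set (Set X) := {V ∈ B | interior (f '' V) ∈ P'} with hB'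
      have hB'B : B' ⊆ B := fun V hV => hV.1
      have hsub : ⋃₀ P' ⊆ f '' (⋃₀ B') := by
        rintro y ⟨W, hW, hyW⟩
        obtain ⟨V, hVB, rfl⟩ := hP' hW
        have : y ∈ f '' V := interior_subset hyW
        obtain ⟨x, hx, rfl⟩ := this
        exact ⟨x, ⟨V, ⟨hVB, hW⟩, hx⟩, rfl⟩
      calc closure (⋃₀ P') ⊆ closure (f '' (⋃₀ B')) := closure_mono hsub
        _ ⊆ f '' closure (⋃₀ B') := hcl.closure_image_subset _
        _ = f '' (⋃ V ∈ B', closure V) := by rw [hcp B' hB'B]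
        _ ⊆ ⋃ W ∈ P', closure W := by
            rintro y ⟨x, hx, rfl⟩
            simp only [mem_iUnion] at hx ⊢
            obtain ⟨V, hVB', hx⟩ := hx
            exact ⟨interior (f '' V), hVB'.2,
              key V (hopen V hVB'.1) ⟨x, hx, rfl⟩⟩
    · refine iUnion₂_subset fun W hW => closure_mono ?_
      exact subset_sUnion_of_mem hW
end

section
/- Let f : X → Y be a continuous, surjective, quasi-open, closed map. If X is an s-m₁-space, then Y is an s-m₁-space. -/
open Set Topology Cardinal

universe u

/-- Key lemma: for a continuous quasi-open map and an open set `V`,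
`f '' closure V ⊆ closure (interior (f '' V))`. -/
lemma quasiOpen_image_closure_subset {X Y : Type*}
    [TopologicalSpace X] [TopologicalSpace Y] {f : X → Y}
    (hc : Continuous f)
    (hqo : ∀ U : Set X, IsOpen U → U.Nonempty → (interior (f '' U)).Nonempty)
    {V : Set X} (hV : IsOpen V) :
    f '' closure V ⊆ closure (interior (f '' V)) := by
  rintro y ⟨x, hx, rfl⟩
  rw [mem_closure_iff]
  intro W hW hyW
  have h1 : (f ⁻¹' W ∩ V).Nonempty :=
    mem_closure_iff.mp hx (f ⁻¹' W) (hW.preimage hc) hyW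
  obtain ⟨z, hz⟩ := hqo _ ((hW.preimage hc).inter hV) h1
  refine ⟨z, ?_, ?_⟩
  · have hsub : f '' (f ⁻¹' W ∩ V) ⊆ W := by
      rintro _ ⟨a, ⟨ha1, _⟩, rfl⟩; exact ha1
    exact hsub (interior_subset hz)
  · exact interior_mono (image_mono inter_subset_right) hz

/-- Quasi-open closed continuous surjections preserve s-m₁-spaces. -/
theorem quasiOpen_closed_preserves_sM1 {X Y : Type*}
    [TopologicalSpace X] [TopologicalSpace Y] (f : X → Y)
    (hc : Continuous f) (hs : Function.Surjective f)
    (hqo : ∀ U : Set X, IsOpen U → U.Nonempty → (interior (f '' U)).Nonempty)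
    (hcl : IsClosedMap f) (h : SM1 X) : SM1 Y := by
  intro G hG
  obtain ⟨B, ⟨hBopen, hBbase⟩, hBcp⟩ := h (f ⁻¹' G) (hG.preimage hc)
  refine ⟨(fun V => interior (f '' V)) '' B, ⟨?_, ?_⟩, ?_⟩
  · -- open and contains G
    rintro _ ⟨V, hVB, rfl⟩
    refine ⟨isOpen_interior, ?_⟩
    intro y hy
    -- y ∈ G; small image V* = (f '' Vᶜ)ᶜ is open, contains y, contained in f '' V
    have hFV : f ⁻¹' G ⊆ V := (hBopen V hVB).2
    have hstar_open : IsOpen (f '' Vᶜ)ᶜ := (hcl _ (hBopen V hVB).1.isClosed_compl).isOpen_compl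
    have hy_star : y ∈ (f '' Vᶜ)ᶜ := by
      rintro ⟨x, hxV, rfl⟩
      exact hxV (hFV hy)
    have hstar_sub : (f '' Vᶜ)ᶜ ⊆ f '' V := by
      intro z hz
      obtain ⟨x, rfl⟩ := hs z
      refine ⟨x, ?_, rfl⟩
      by_contra hxV
      exact hz ⟨x, hxV, rfl⟩
    exact mem_interior.mpr ⟨(f '' Vᶜ)ᶜ, hstar_sub, hstar_open, hy_star⟩
  · -- base property
    intro U hU hGU
    obtain ⟨V, hVB, hVU⟩ := hBbase (f ⁻¹' U) (hU.preimage hc) (fun x hx => hGU hx)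
    refine ⟨interior (f '' V), ⟨V, hVB, rfl⟩, ?_⟩
    refine interior_subset.trans ?_
    rintro _ ⟨x, hxV, rfl⟩
    exact hVU hxV
  · -- closure preserving
    intro C' hC'
    apply subset_antisymm
    · -- the hard direction
      set B' : Set (Set X) := {V ∈ B | interior (f '' V) ∈ C'} with hB'def
      have hB'B : B' ⊆ B := fun V hV => hV.1
      have hUC' : ⋃₀ C' ⊆ f '' (⋃₀ B') := by
        intro y hy
        obtain ⟨W, hWC', hyW⟩ := hy
        obtain ⟨V, hVB, rfl⟩ := hC' hWC'
        have : y ∈ f '' V := interior_subset hyW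
        obtain ⟨x, hxV, rfl⟩ := this
        exact ⟨x, ⟨V, ⟨hVB, hWC'⟩, hxV⟩, rfl⟩
      have step1 : closure (⋃₀ C') ⊆ f '' closure (⋃₀ B') :=
        closure_minimal (hUC'.trans (image_mono subset_closure))
          (hcl _ isClosed_closure)
      refine step1.trans ?_
      rw [hBcp B' hB'B, image_iUnion₂]
      intro y hy
      simp only [mem_iUnion] at hy
      obtain ⟨V, hVB', hyV⟩ := hy
      have := quasiOpen_image_closure_subset hc hqo (hBopen V (hB'B hVB')).1 hyV
      exact mem_iUnion₂.mpr ⟨interior (f '' V), hVB'.2, this⟩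
    · -- easy direction
      intro y hy
      obtain ⟨W, hWC', hyW⟩ := mem_iUnion₂.mp hy
      exact closure_mono (subset_sUnion_of_mem hWC') hyW
end

section
/- Continuous closed irreducible surjections preserve s-m₁-spaces: if f : X → Y is a continuous, closed, irreducible surjection and X is an s-m₁-space, then Y is an s-m₁-space. -/
open Set Topology Cardinal

universe u

/-- Continuous closed irreducible surjections preserve s-m₁-spaces. -/
theorem closed_irreducible_preserves_sM1 {X Y : Type*}
    [TopologicalSpace X] [TopologicalSpace Y] (f : X → Y)
    (hc : Continuous f) (hs : Function.Surjective f) (hcl : IsClosedMap f)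
    (hirr : ∀ F : Set X, IsClosed F → F ≠ Set.univ → f '' F ≠ Set.univ)
    (h : SM1 X) : SM1 Y := by
  intro G hG
  obtain ⟨B, ⟨hBopen, hBbase⟩, hBcp⟩ := h (f ⁻¹' G) (hG.preimage hc)
  set g : Set X → Set Y := fun V => (f '' Vᶜ)ᶜ with hgdef
  have hmem : ∀ (S : Set X) (y : Y), y ∈ g S ↔ ∀ x, f x = y → x ∈ S := by
    intro S y
    simp only [hgdef, mem_compl_iff, mem_image, not_exists, not_and]
    constructor
    · intro hh x hx; by_contra hxS; exact hh x hxS hx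
    · intro hh x hxS hx; exact hxS (hh x hx)
  have hmono : ∀ ⦃S T : Set X⦄, S ⊆ T → g S ⊆ g T := by
    intro S T hST y hy
    rw [hmem] at *
    exact fun x hx => hST (hy x hx)
  have hopen : ∀ S : Set X, IsOpen S → IsOpen (g S) :=
    fun S hS => (hcl _ hS.isClosed_compl).isOpen_compl
  have hsubimg : ∀ S : Set X, g S ⊆ f '' S := by
    intro S y hy
    obtain ⟨x, hx⟩ := hs y
    exact ⟨x, (hmem S y).1 hy x hx, hx⟩
  have hcleq : ∀ S : Set X, IsOpen S → closure (g S) = f '' closure S := by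
    intro S hS
    apply Subset.antisymm
    · exact closure_minimal ((hsubimg S).trans (image_mono subset_closure))
        (hcl _ isClosed_closure)
    · rintro y ⟨x, hx, rfl⟩
      rw [mem_closure_iff]
      intro W hW hyW
      have hO : (f ⁻¹' W ∩ S).Nonempty :=
        (mem_closure_iff.1 hx) (f ⁻¹' W) (hW.preimage hc) hyW
      have hne : (f ⁻¹' W ∩ S)ᶜ ≠ Set.univ := by
        intro heq
        obtain ⟨z, hz⟩ := hO
        exact (heq ▸ mem_univ z : z ∈ (f ⁻¹' W ∩ S)ᶜ) hz
      have hcls : IsClosed (f ⁻¹' W ∩ S)ᶜ := ((hW.preimage hc).inter hS).isClosed_compl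
      obtain ⟨y', hy'⟩ := (ne_univ_iff_exists_notMem _).1 (hirr _ hcls hne)
      refine ⟨y', ?_, ?_⟩
      · obtain ⟨x', hx'⟩ := hs y'
        have hx'mem : x' ∈ f ⁻¹' W ∩ S := by
          by_contra hxn
          exact hy' ⟨x', hxn, hx'⟩
        exact hx' ▸ hx'mem.1
      · rw [hmem]
        intro x2 hx2
        by_contra hxn
        exact hy' ⟨x2, fun h2 => hxn h2.2, hx2⟩
  refine ⟨g '' B, ⟨?_, ?_⟩, ?_⟩
  · rintro W ⟨V, hV, rfl⟩
    refine ⟨hopen V (hBopen V hV).1, ?_⟩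
    intro y hy
    rw [hmem]
    intro x hx
    exact (hBopen V hV).2 (show x ∈ f ⁻¹' G by simp [hx, hy])
  · intro U hU hGU
    obtain ⟨V, hV, hVU⟩ := hBbase (f ⁻¹' U) (hU.preimage hc) (preimage_mono hGU)
    refine ⟨g V, ⟨V, hV, rfl⟩, ?_⟩
    intro y hy
    obtain ⟨x, hx⟩ := hs y
    exact hx ▸ hVU ((hmem V y).1 hy x hx)
  · intro P' hP'
    apply Subset.antisymm
    · set Q : Set (Set X) := {V ∈ B | g V ∈ P'} with hQ
      have hQB : Q ⊆ B := fun V hV => hV.1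
      have hQopen : IsOpen (⋃₀ Q) := isOpen_sUnion fun V hV => (hBopen V (hQB hV)).1
      have h1 : ⋃₀ P' ⊆ g (⋃₀ Q) := by
        rintro y ⟨W, hW, hy⟩
        obtain ⟨V, hV, rfl⟩ := hP' hW
        have hVQ : V ∈ Q := ⟨hV, hW⟩
        exact hmono (subset_sUnion_of_mem hVQ) hy
      calc closure (⋃₀ P') ⊆ closure (g (⋃₀ Q)) := closure_mono h1
        _ = f '' closure (⋃₀ Q) := hcleq _ hQopen
        _ = f '' ⋃ V ∈ Q, closure V := by rw [hBcp Q hQB]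
        _ = ⋃ V ∈ Q, f '' closure V := by rw [image_iUnion₂]
        _ ⊆ ⋃ W ∈ P', closure W := by
            refine iUnion₂_subset fun V hV => ?_
            rw [← hcleq V (hBopen V (hQB hV)).1]
            exact subset_biUnion_of_mem hV.2
    · exact iUnion₂_subset fun W hW => closure_mono (subset_sUnion_of_mem hW)
end

section
/- Suppose every closed subset F of a space X has a σ-closure-preserving outer base ℬ = ⋃ₙ ℬₙ of open sets with each ℬₙ closure-preserving and ℬₙ ⊆ ℬₙ₊₁, and X is compact. Then every closed F ⊆ X has a σ-closure-preserving open neighborhood base: namely the sets ⋃ℬ′ where ℬ′ is a finite subfamily of some ℬₙ covering F. In particular, every Eberlein compact space is an s-σ-m₁-space. -/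
open Set Topology Cardinal

universe u

/-- In a compact space, if a closed set `F` has a σ-closure-preserving outer base
`⋃ n, B n` of open sets with each `B n` closure-preserving and `B n ⊆ B (n+1)`, then the
finite unions of members of the `B n` covering `F` form a σ-closure-preserving open
neighborhood base at `F`.  In particular, every Eberlein compact space (where every closed
set has such an outer base) is an s-σ-m₁-space. -/
theorem compact_sigma_cp_outer_base_gives_sigma_cp_nbhd_base {X : Type*}
    [TopologicalSpace X] [CompactSpace X]
    (F : Set X) (hF : IsClosed F) (B : ℕ → Set (Set X))
    (hcp : ∀ n, ClosurePreserving (B n))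
    (hmono : ∀ n, B n ⊆ B (n + 1))
    (hopen : ∀ n, ∀ V ∈ B n, IsOpen V)
    (houter : ∀ x ∈ F, ∀ U : Set X, IsOpen U → x ∈ U → ∃ n, ∃ V ∈ B n, x ∈ V ∧ V ⊆ U) :
    ∀ P : (ℕ → Set (Set X)),
      (P = fun n => {W | ∃ B' : Set (Set X), B' ⊆ B n ∧ B'.Finite ∧ F ⊆ ⋃₀ B' ∧ W = ⋃₀ B'}) →
      (∀ n, ClosurePreserving (P n)) ∧
      (∀ n, ∀ W ∈ P n, IsOpen W ∧ F ⊆ W) ∧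
      (∀ U : Set X, IsOpen U → F ⊆ U → ∃ n, ∃ W ∈ P n, W ⊆ U) := by
  intro P hP
  subst hP
  have hmono' : ∀ m n, m ≤ n → B m ⊆ B n := by
    intro m n h
    induction h with
    | refl => exact fun _ h => h
    | step _ ih => exact fun V hV => hmono _ (ih hV)
  refine ⟨?_, ?_, ?_⟩
  · -- closure preserving
    intro n P' hP'
    have hP2 : ∀ W ∈ P', ∃ B' : Set (Set X),
        B' ⊆ B n ∧ B'.Finite ∧ F ⊆ ⋃₀ B' ∧ W = ⋃₀ B' := fun W hW => hP' hW
    choose! f hf1 hf2 hf3 hf4 using hP2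
    set Q : Set (Set X) := ⋃ W ∈ P', f W with hQ
    have hQB : Q ⊆ B n := by
      intro V hV
      simp only [hQ, mem_iUnion] at hV
      obtain ⟨W, hW, hV⟩ := hV
      exact hf1 W hW hV
    have hUnion : ⋃₀ P' = ⋃₀ Q := by
      ext x
      simp only [mem_sUnion, hQ, mem_iUnion]
      constructor
      · rintro ⟨W, hW, hx⟩
        rw [hf4 W hW] at hx
        obtain ⟨V, hV, hx⟩ := hx
        exact ⟨V, ⟨W, hW, hV⟩, hx⟩
      · rintro ⟨V, ⟨W, hW, hV⟩, hx⟩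
        exact ⟨W, hW, by rw [hf4 W hW]; exact ⟨V, hV, hx⟩⟩
    rw [hUnion, hcp n Q hQB]
    ext x
    simp only [mem_iUnion, hQ]
    constructor
    · rintro ⟨V, ⟨W, hW, hV⟩, hx⟩
      refine ⟨W, hW, ?_⟩
      rw [hf4 W hW, hcp n (f W) (hf1 W hW)]
      exact mem_iUnion₂.2 ⟨V, hV, hx⟩
    · rintro ⟨W, hW, hx⟩
      rw [hf4 W hW, hcp n (f W) (hf1 W hW)] at hx
      obtain ⟨V, hV, hx⟩ := mem_iUnion₂.1 hx
      exact ⟨V, ⟨W, hW, hV⟩, hx⟩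
  · rintro n W ⟨B', hB'n, _, hFB', rfl⟩
    exact ⟨isOpen_sUnion fun V hV => hopen n V (hB'n hV), hFB'⟩
  · intro U hU hFU
    have h : ∀ x ∈ F, ∃ n, ∃ V ∈ B n, x ∈ V ∧ V ⊆ U := fun x hx =>
      houter x hx U hU (hFU hx)
    choose! n V hVB hxV hVU using h
    obtain ⟨t, htF, htfin, htcov⟩ :=
      hF.isCompact.elim_finite_subcover_image (fun x hx => hopen _ _ (hVB x hx))
        (fun x hx => mem_biUnion hx (hxV x hx))
    obtain ⟨N, hN⟩ := (htfin.image n).bddAbove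
    refine ⟨N, ⋃₀ (V '' t), ⟨V '' t, ?_, htfin.image V, ?_, rfl⟩, ?_⟩
    · rintro _ ⟨x, hx, rfl⟩
      exact hmono' (n x) N (hN ⟨x, hx, rfl⟩) (hVB x (htF hx))
    · rwa [sUnion_image]
    · rw [sUnion_image]
      exact iUnion₂_subset fun x hx => hVU x (htF hx)
end

section
/- If a closure-preserving family of subsets of X is mapped forward by a continuous closed surjection f : X → Y, the resulting family of images is closure-preserving in Y; consequently, closed continuous surjections preserve s-m₂-spaces and s-σ-m₂-spaces. -/
open Set Topology Cardinal

/-- `X` is s-σ-m₂: every closed set has a σ-closure-preserving local quasi-base. -/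
def SSigmaM2 (X : Type*) [TopologicalSpace X] : Prop :=
  ∀ F : Set X, IsClosed F → ∃ Q : ℕ → Set (Set X),
    (∀ n, ClosurePreserving (Q n)) ∧ (∀ n, ∀ B ∈ Q n, F ⊆ interior B) ∧
    (∀ U : Set X, IsOpen U → F ⊆ U → ∃ n, ∃ B ∈ Q n, B ⊆ U)

lemma closure_image_eq' {X Y : Type*} [TopologicalSpace X] [TopologicalSpace Y]
    {f : X → Y} (hc : Continuous f) (hcl : IsClosedMap f) (s : Set X) :
    closure (f '' s) = f '' closure s :=
  subset_antisymm
    (closure_minimal (image_mono (f := f) subset_closure) (hcl _ isClosed_closure))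
    (image_closure_subset_closure_image hc)

lemma interior_lift {X Y : Type*} [TopologicalSpace X] [TopologicalSpace Y]
    {f : X → Y} (hcl : IsClosedMap f) (hs : Function.Surjective f)
    {F : Set Y} {B : Set X} (h : f ⁻¹' F ⊆ interior B) : F ⊆ interior (f '' B) := by
  have hV : IsOpen ((f '' (interior B)ᶜ)ᶜ) := (hcl _ isOpen_interior.isClosed_compl).isOpen_compl
  have hFV : F ⊆ (f '' (interior B)ᶜ)ᶜ := by
    intro y hy
    rintro ⟨x, hx, rfl⟩
    exact hx (h hy)
  have hVB : (f '' (interior B)ᶜ)ᶜ ⊆ f '' B := by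
    intro y hy
    obtain ⟨x, rfl⟩ := hs y
    by_cases hx : x ∈ interior B
    · exact ⟨x, interior_subset hx, rfl⟩
    · exact absurd ⟨x, hx, rfl⟩ hy
  exact fun y hy => interior_maximal hVB hV (hFV hy)

lemma cp_image {X Y : Type*} [TopologicalSpace X] [TopologicalSpace Y]
    {f : X → Y} (hc : Continuous f) (hcl : IsClosedMap f)
    (P : Set (Set X)) (hP : ClosurePreserving P) :
    ClosurePreserving ((fun B => f '' B) '' P) := by
  intro P' hP'
  set P₀ : Set (Set X) := {B | B ∈ P ∧ f '' B ∈ P'} with hP₀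
  have hunion : ⋃₀ P' = f '' ⋃₀ P₀ := by
    apply subset_antisymm
    · rintro y ⟨C, hC, hyC⟩
      obtain ⟨B, hB, rfl⟩ := hP' hC
      obtain ⟨x, hx, rfl⟩ := hyC
      exact ⟨x, ⟨B, ⟨hB, hC⟩, hx⟩, rfl⟩
    · rintro y ⟨x, ⟨B, hB, hx⟩, rfl⟩
      exact ⟨f '' B, hB.2, ⟨x, hx, rfl⟩⟩
  rw [hunion, closure_image_eq' hc hcl, hP P₀ (fun B hB => hB.1), image_iUnion₂]
  apply subset_antisymm
  · refine iUnion₂_subset fun B hB => ?_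
    rw [← closure_image_eq' hc hcl]
    exact subset_biUnion_of_mem (u := fun C => closure C) hB.2
  · refine iUnion₂_subset fun C hC => ?_
    obtain ⟨B, hB, rfl⟩ := hP' hC
    rw [closure_image_eq' hc hcl]
    exact subset_biUnion_of_mem (u := fun B => f '' closure B) (show B ∈ P₀ from ⟨hB, hC⟩)

/-- Continuous closed surjections send closure-preserving families to closure-preserving
families, and consequently preserve s-m₂-spaces and s-σ-m₂-spaces. -/
theorem closed_map_closurePreserving_and_preserves_sM2 {X Y : Type*}
    [TopologicalSpace X] [TopologicalSpace Y] (f : X → Y)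
    (hc : Continuous f) (hcl : IsClosedMap f) (hs : Function.Surjective f) :
    (∀ P : Set (Set X), ClosurePreserving P → ClosurePreserving ((fun B => f '' B) '' P)) ∧
    (SM2 X → SM2 Y) ∧ (SSigmaM2 X → SSigmaM2 Y) := by
  refine ⟨cp_image hc hcl, ?_, ?_⟩
  · intro h F hF
    obtain ⟨Q, hQi, hQb, hQcp⟩ := h (f ⁻¹' F) (hF.preimage hc)
    refine ⟨(fun B => f '' B) '' Q, ?_, ?_, cp_image hc hcl Q hQcp⟩
    · rintro _ ⟨B, hB, rfl⟩
      exact interior_lift hcl hs (hQi B hB)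
    · intro U hU hFU
      obtain ⟨B, hB, hBU⟩ := hQb (f ⁻¹' U) (hU.preimage hc) (preimage_mono hFU)
      exact ⟨f '' B, ⟨B, hB, rfl⟩, image_subset_iff.2 hBU⟩
  · intro h F hF
    obtain ⟨Q, hQcp, hQi, hQb⟩ := h (f ⁻¹' F) (hF.preimage hc)
    refine ⟨fun n => (fun B => f '' B) '' Q n, fun n => cp_image hc hcl (Q n) (hQcp n), ?_, ?_⟩
    · rintro n _ ⟨B, hB, rfl⟩
      exact interior_lift hcl hs (hQi n B hB)
    · intro U hU hFU
      obtain ⟨n, B, hB, hBU⟩ := hQb (f ⁻¹' U) (hU.preimage hc) (preimage_mono hFU)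
      exact ⟨n, f '' B, ⟨B, hB, rfl⟩, image_subset_iff.2 hBU⟩
end

section
/- Every monotonically normal T₁ space is an s-m₃-space: every closed subset has a cushioned local pairbase. -/
open Set Topology Cardinal

/-- Every monotonically normal T₁ space is an s-m₃-space. -/
theorem monotonicallyNormal_implies_sM3 {X : Type*} [TopologicalSpace X] [T1Space X]
    (G : Set X → Set X → Set X)
    (hopen : ∀ H K : Set X, IsClosed H → IsClosed K → Disjoint H K → IsOpen (G H K))
    (hsep : ∀ H K : Set X, IsClosed H → IsClosed K → Disjoint H K →
      H ⊆ G H K ∧ closure (G H K) ⊆ Kᶜ)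
    (hmono : ∀ H K H' K' : Set X, IsClosed H → IsClosed K → Disjoint H K →
      IsClosed H' → IsClosed K' → Disjoint H' K' → H ⊆ H' → K' ⊆ K → G H K ⊆ G H' K')
    (hdisj : ∀ H K : Set X, IsClosed H → IsClosed K → Disjoint H K →
      G H K ∩ G K H = ∅) :
    SM3 X := by
  intro F hF
  refine ⟨{p | ∃ U : Set X, IsOpen U ∧ F ⊆ U ∧ p = (G F Uᶜ, U)}, ?_, ?_, ?_⟩
  · rintro p ⟨U, hU, hFU, rfl⟩
    have hd : Disjoint F Uᶜ := disjoint_compl_right_iff_subset.mpr hFU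
    refine ⟨hopen _ _ hF hU.isClosed_compl hd, (hsep _ _ hF hU.isClosed_compl hd).1, ?_⟩
    have := (hsep _ _ hF hU.isClosed_compl hd).2
    rw [compl_compl] at this
    exact subset_closure.trans this
  · intro U hU hFU
    exact ⟨(G F Uᶜ, U), ⟨U, hU, hFU, rfl⟩, subset_rfl⟩
  · intro P' hP' x hx
    by_contra hxn
    simp only [mem_iUnion, not_exists] at hxn
    -- the union is nonempty, so P' is nonempty and x lies outside some U ⊇ F
    have hne : (⋃ p ∈ P', p.1).Nonempty := by
      by_contra h
      rw [not_nonempty_iff_eq_empty] at h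
      rw [h, closure_empty] at hx
      exact hx
    obtain ⟨y, hy⟩ := hne
    simp only [mem_iUnion] at hy
    obtain ⟨p0, hp0, _⟩ := hy
    obtain ⟨U0, hU0, hFU0, hp0eq⟩ := hP' hp0
    have hxF : x ∉ F := by
      intro hxF
      have : x ∈ U0 := hFU0 hxF
      have := hxn p0 hp0
      rw [hp0eq] at this
      exact this ‹x ∈ U0›
    have hdx : Disjoint F {x} := disjoint_singleton_right.mpr hxF
    have hsub : (⋃ p ∈ P', p.1) ⊆ G F {x} := by
      refine iUnion₂_subset ?_
      intro p hp
      obtain ⟨U, hU, hFU, rfl⟩ := hP' hp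
      have hd : Disjoint F Uᶜ := disjoint_compl_right_iff_subset.mpr hFU
      have hxU : x ∉ U := hxn _ hp
      exact hmono F Uᶜ F {x} hF hU.isClosed_compl hd hF isClosed_singleton hdx
        subset_rfl (singleton_subset_iff.mpr hxU)
    have := (closure_mono hsub).trans (hsep F {x} hF isClosed_singleton hdx).2 hx
    simp at this
end

section
/- Suppose a space X has, at a point x, a σ-cushioned local pairbase, and κ is an infinite cardinal such that some open neighborhood U of x has cellularity at most κ. Then the tightness of X at x is at most κ: for every set A ⊆ X with x ∈ cl(A), there exists B ⊆ A with |B| ≤ κ and x ∈ cl(B). -/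
open Set Topology Cardinal

/-- `X` is σ-m₃ at `x`: there is a σ-cushioned local pairbase at `x`. -/
def SigmaM3At {X : Type*} [TopologicalSpace X] (x : X) : Prop :=
  ∃ P : ℕ → Set (Set X × Set X),
    (∀ n, Cushioned (P n)) ∧
    (∀ n, ∀ p ∈ P n, IsOpen p.1 ∧ p.1 ⊆ p.2) ∧
    (∀ U : Set X, IsOpen U → x ∈ U → ∃ n, ∃ p ∈ P n, x ∈ p.1 ∧ p.2 ⊆ U)

universe u

/-- If `X` is σ-m₃ at `x` and some open neighborhood `U` of `x` has cellularity at most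
the infinite cardinal `κ`, then the tightness of `X` at `x` is at most `κ`. -/
theorem sigmaM3_at_tightness_le_cellularity {X : Type u} [TopologicalSpace X]
    (x : X) (h : SigmaM3At x) (κ : Cardinal.{u}) (hκ : ℵ₀ ≤ κ)
    (U : Set X) (hU : IsOpen U) (hxU : x ∈ U)
    (hcell : ∀ C : Set (Set X), (∀ V ∈ C, IsOpen V ∧ V.Nonempty ∧ V ⊆ U) →
      C.PairwiseDisjoint id → #C ≤ κ) :
    ∀ A : Set X, x ∈ closure A → ∃ B ⊆ A, #B ≤ κ ∧ x ∈ closure B := by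
  classical
  obtain ⟨P, hcush, hpair, hbase⟩ := h
  intro A hxA
  by_contra hcon
  push_neg at hcon
  -- hcon : ∀ B ⊆ A, #B ≤ κ → x ∉ closure B
  -- predicate for the recursion: z = (a, (p, n))
  let Q : Set X → X × ((Set X × Set X) × ℕ) → Prop := fun B z =>
    z.2.1 ∈ P z.2.2 ∧ x ∈ z.2.1.1 ∧ z.2.1.2 ⊆ U ∧ z.1 ∈ z.2.1.1 ∧ z.1 ∈ A ∧
      ∀ b ∈ B, b ∈ A → b ∉ z.2.1.2
  have key : ∀ B : Set X, #B ≤ κ → ∃ z, Q B z := by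
    intro B hB
    have h1 : x ∉ closure (B ∩ A) :=
      hcon (B ∩ A) inter_subset_right
        (le_trans (mk_le_mk_of_subset inter_subset_left) hB)
    have hG : IsOpen (U ∩ (closure (B ∩ A))ᶜ) :=
      hU.inter isClosed_closure.isOpen_compl
    obtain ⟨n, p, hpP, hxp, hpsub⟩ := hbase _ hG ⟨hxU, h1⟩
    have hne : (p.1 ∩ A).Nonempty :=
      mem_closure_iff.mp hxA p.1 (hpair n p hpP).1 hxp
    obtain ⟨a, ha1, ha2⟩ := hne
    refine ⟨⟨a, p, n⟩, hpP, hxp, fun y hy => (hpsub hy).1, ha1, ha2, ?_⟩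
    intro b hbB hbA hb2
    exact (hpsub hb2).2 (subset_closure ⟨hbB, hbA⟩)
  -- the index type of cardinality κ⁺
  let ι := (Order.succ κ).ord.ToType
  haveI hwo : IsWellOrder ι (· < ·) :=
    isWellOrder_lt
  have hcardι : #ι = Order.succ κ := by
    rw [show #ι = ((Order.succ κ).ord).card from Cardinal.mk_toType _, Cardinal.card_ord]
  have hseg : ∀ a : ι, #{b : ι | b < a} ≤ κ := by
    intro a
    have h1 : Ordinal.typein (· < ·) a < (Order.succ κ).ord := Ordinal.typein_lt_self a
    have h2 : (Ordinal.typein (· < ·) a).card < Order.succ κ := Cardinal.lt_ord.mp h1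
    have h3 : #{b : ι // b < a} = (Ordinal.typein ((· < ·) : ι → ι → Prop) a).card :=
      Ordinal.card_typein a
    exact Order.lt_succ_iff.mp (h3.symm ▸ h2)
  have wf : WellFounded ((· < ·) : ι → ι → Prop) := IsWellFounded.wf
  have key' : ∀ (a : ι) (ih : ∀ b : ι, b < a → X × ((Set X × Set X) × ℕ)),
      ∃ z, Q (⋃ (b : ι) (hb : b < a), {(ih b hb).1}) z := by
    intro a ih
    apply key
    have hsub : (⋃ (b : ι) (hb : b < a), {(ih b hb).1}) ⊆
        range (fun b : {b : ι // b < a} => (ih b.1 b.2).1) := by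
      intro y hy
      simp only [mem_iUnion, mem_singleton_iff] at hy
      obtain ⟨b, hb, rfl⟩ := hy
      exact ⟨⟨b, hb⟩, rfl⟩
    calc #(⋃ (b : ι) (hb : b < a), {(ih b hb).1})
        ≤ #(range (fun b : {b : ι // b < a} => (ih b.1 b.2).1)) := mk_le_mk_of_subset hsub
      _ ≤ #{b : ι // b < a} := mk_range_le
      _ ≤ κ := hseg a
  obtain ⟨g, hg⟩ : ∃ g : ι → X × ((Set X × Set X) × ℕ),
      ∀ a : ι, Q (⋃ (b : ι) (hb : b < a), {(g b).1}) (g a) := by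
    refine ⟨wf.fix (fun a ih => (key' a ih).choose), fun a => ?_⟩
    have heq := wf.fix_eq (fun a ih => (key' a ih).choose) a
    rw [heq]
    exact (key' a (fun b _ => wf.fix (fun a ih => (key' a ih).choose) b)).choose_spec
  set a : ι → X := fun α => (g α).1 with ha
  set p : ι → Set X × Set X := fun α => (g α).2.1 with hp
  set n : ι → ℕ := fun α => (g α).2.2 with hn
  have hgP : ∀ α, p α ∈ P (n α) := fun α => (hg α).1
  have hgx : ∀ α, x ∈ (p α).1 := fun α => (hg α).2.1
  have hgU : ∀ α, (p α).2 ⊆ U := fun α => (hg α).2.2.1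
  have hga1 : ∀ α, a α ∈ (p α).1 := fun α => (hg α).2.2.2.1
  have hgaA : ∀ α, a α ∈ A := fun α => (hg α).2.2.2.2.1
  have hgavoid : ∀ α β : ι, β < α → a β ∉ (p α).2 := by
    intro α β hβ
    refine (hg α).2.2.2.2.2 (a β) ?_ (hgaA β)
    simp only [mem_iUnion, mem_singleton_iff]
    exact ⟨β, hβ, rfl⟩
  -- pigeonhole: some fiber of n has cardinality > κ
  have hfiber : ∃ m : ℕ, κ < #{α : ι | n α = m} := by
    by_contra hm
    push_neg at hm
    have huniv : (univ : Set ι) ⊆ ⋃ m : ULift.{u} ℕ, {α : ι | n α = m.down} := by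
      intro α _
      exact mem_iUnion.mpr ⟨⟨n α⟩, rfl⟩
    have h1 : #ι ≤ ℵ₀ * κ := by
      calc #ι = #(univ : Set ι) := mk_univ.symm
        _ ≤ #(⋃ m : ULift.{u} ℕ, {α : ι | n α = m.down}) := mk_le_mk_of_subset huniv
        _ ≤ #(ULift.{u} ℕ) * ⨆ m : ULift.{u} ℕ, #{α : ι | n α = m.down} := mk_iUnion_le _
        _ ≤ ℵ₀ * κ := by
            rw [mk_denumerable]
            exact mul_le_mul_right (ciSup_le' fun (m : ULift.{u} ℕ) => hm m.down) _
    have h2 : #ι ≤ κ := by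
      rwa [mul_eq_max le_rfl hκ, max_eq_right hκ] at h1
    rw [hcardι] at h2
    exact absurd h2 (not_le.mpr (Order.lt_succ κ))
  obtain ⟨m, hm⟩ := hfiber
  set I : Set ι := {α : ι | n α = m} with hI
  -- the disjoint open family
  set O : ι → Set X := fun α =>
    (p α).1 \ closure (⋃ β ∈ {γ ∈ I | α < γ}, (p β).1) with hO
  have hPsub : ∀ α : ι, (fun γ : ι => p γ) '' {γ ∈ I | α < γ} ⊆ P m := by
    rintro α q ⟨γ, hγ, rfl⟩
    have : n γ = m := hγ.1
    rw [← this]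
    exact hgP γ
  have hOne : ∀ α ∈ I, (a α) ∈ O α := by
    intro α hα
    refine ⟨hga1 α, ?_⟩
    intro hmem
    -- use the cushioned property
    have hclsub := hcush m ((fun γ : ι => p γ) '' {γ ∈ I | α < γ}) (hPsub α)
    have hequ : (⋃ β ∈ {γ ∈ I | α < γ}, (p β).1) =
        ⋃ q ∈ (fun γ : ι => p γ) '' {γ ∈ I | α < γ}, q.1 := by
      rw [biUnion_image]
    rw [hequ] at hmem
    have := hclsub hmem
    simp only [mem_iUnion, mem_image] at this
    obtain ⟨q, ⟨γ, hγ, rfl⟩, haq⟩ := this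
    exact hgavoid γ α hγ.2 haq
  have hdisj : ∀ α ∈ I, ∀ γ ∈ I, α < γ → Disjoint (O α) (O γ) := by
    intro α hα γ hγ hlt
    refine Set.disjoint_left.mpr ?_
    intro y hyα hyγ
    apply hyα.2
    apply subset_closure
    exact mem_biUnion ⟨hγ, hlt⟩ hyγ.1
  have hInj : InjOn O I := by
    intro α hα γ hγ hOeq
    by_contra hne
    rcases lt_or_gt_of_ne hne with hlt | hlt
    · have := hdisj α hα γ hγ hlt
      rw [hOeq] at this
      exact absurd (hOne γ hγ) (fun hmem => (Set.disjoint_left.mp this hmem) hmem)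
    · have := hdisj γ hγ α hα hlt
      rw [hOeq] at this
      exact absurd (hOne γ hγ) (fun hmem => (Set.disjoint_left.mp this hmem) hmem)
  have hCle : #(O '' I) ≤ κ := by
    apply hcell
    · rintro V ⟨α, hα, rfl⟩
      refine ⟨(hpair _ _ (hgP α)).1.sdiff isClosed_closure, ⟨a α, hOne α hα⟩, ?_⟩
      exact fun y hy => hgU α ((hpair _ _ (hgP α)).2 hy.1)
    · rintro V ⟨α, hα, rfl⟩ W ⟨γ, hγ, rfl⟩ hVW
      have hne : α ≠ γ := fun hc => hVW (by rw [hc])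
      rcases lt_or_gt_of_ne hne with hlt | hlt
      · exact (hdisj α hα γ hγ hlt)
      · exact (hdisj γ hγ α hα hlt).symm
  have : #I ≤ κ := by
    rw [← mk_image_eq_of_injOn O I hInj]
    exact hCle
  exact absurd this (not_le.mpr hm)
end

section
/- If X is a σ-m₃-space (every point has a σ-cushioned local pairbase), then the tightness of X is at most its cellularity: t(X) ≤ c(X). -/
open Set Topology Cardinal

universe u

theorem key_lemma {X : Type u} [TopologicalSpace X]
    (κ : Cardinal.{u}) (hκ : ℵ₀ ≤ κ)
    (hcell : ∀ C : Set (Set X), (∀ V ∈ C, IsOpen V ∧ V.Nonempty) →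
      C.PairwiseDisjoint id → #C ≤ κ)
    (P : Set (Set X × Set X)) (hc : Cushioned P)
    (hop : ∀ p ∈ P, IsOpen p.1 ∧ p.1 ⊆ p.2)
    (x : X) (A : Set X) (hx : x ∈ closure A) :
    ∃ B : Set X, B ⊆ A ∧ #B ≤ κ ∧ ∀ p ∈ P, x ∈ p.1 → (B ∩ p.2).Nonempty := by
  by_contra hcon
  push_neg at hcon
  have step : ∀ B : Set X, B ⊆ A → #B ≤ κ →
      ∃ y q, q ∈ P ∧ x ∈ q.1 ∧ y ∈ A ∧ y ∈ q.1 ∧ ∀ b ∈ B, b ∉ q.2 := by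
    intro B hBA hBκ
    obtain ⟨q, hqP, hxq, hq⟩ := hcon B hBA hBκ
    have hne : (q.1 ∩ A).Nonempty :=
      mem_closure_iff.mp hx q.1 (hop q hqP).1 hxq
    obtain ⟨y, hy1, hyA⟩ := hne
    exact ⟨y, q, hqP, hxq, hyA, hy1, fun b hb hb2 =>
      Set.nonempty_iff_ne_empty.mp (⟨b, hb, hb2⟩ : (B ∩ q.2).Nonempty) hq⟩
  classical
  set W := (Order.succ κ).ord.ToType with hWdef
  let Pick : Set X → X × (Set X × Set X) := fun B =>
    if h : ∃ y q, q ∈ P ∧ x ∈ q.1 ∧ y ∈ A ∧ y ∈ q.1 ∧ ∀ b ∈ B, b ∉ q.2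
    then ⟨h.choose, h.choose_spec.choose⟩
    else ⟨x, ∅, ∅⟩
  let f : W → X × (Set X × Set X) :=
    WellFoundedLT.fix (motive := fun _ => X × (Set X × Set X))
      (fun w ih => Pick {y | ∃ v, ∃ _ : v < w, (ih v ‹_›).1 = y})
  have hfix : ∀ w : W, f w = Pick ((fun v => (f v).1) '' Iio w) := by
    intro w
    show WellFoundedLT.fix _ w = _
    rw [WellFoundedLT.fix_eq]
    congr 1
    ext y
    simp only [Set.mem_setOf_eq, Set.mem_image, Set.mem_Iio]
    exact ⟨fun ⟨v, hv, e⟩ => ⟨v, hv, e⟩, fun ⟨v, hv, e⟩ => ⟨v, hv, e⟩⟩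
  let a : W → X := fun w => (f w).1
  let q : W → Set X × Set X := fun w => (f w).2
  have hIio : ∀ w : W, #(Set.Iio w) ≤ κ := by
    intro w
    have := Cardinal.mk_Iio_ord_toType (c := Order.succ κ) w
    exact Order.lt_succ_iff.mp this
  have main : ∀ w : W, a w ∈ A ∧ q w ∈ P ∧ x ∈ (q w).1 ∧ a w ∈ (q w).1 ∧
      ∀ v, v < w → a v ∉ (q w).2 := by
    intro w
    induction w using WellFoundedLT.induction with
    | ind w IH =>
      have hBA : (fun v => (f v).1) '' Iio w ⊆ A := by
        rintro _ ⟨v, hv, rfl⟩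
        exact (IH v hv).1
      have hBκ : #((fun v => (f v).1) '' Iio w) ≤ κ :=
        le_trans (Cardinal.mk_image_le) (hIio w)
      have hex := step _ hBA hBκ
      have hfw := hfix w
      have : f w = ⟨hex.choose, hex.choose_spec.choose⟩ := by
        rw [hfw]; exact dif_pos hex
      obtain ⟨hqP, hxq, hyA, hyq, hnb⟩ := hex.choose_spec.choose_spec
      refine ⟨?_, ?_, ?_, ?_, ?_⟩
      · show (f w).1 ∈ A; rw [this]; exact hyA
      · show (f w).2 ∈ P; rw [this]; exact hqP
      · show x ∈ (f w).2.1; rw [this]; exact hxq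
      · show (f w).1 ∈ (f w).2.1; rw [this]; exact hyq
      · intro v hv
        show (f v).1 ∉ (f w).2.2
        rw [this]
        exact hnb _ ⟨v, hv, rfl⟩
  -- the disjoint open family
  let Wo : W → Set X := fun w => (q w).1 \ closure (⋃ v ∈ Ioi w, (q v).1)
  have hopen : ∀ w, IsOpen (Wo w) :=
    fun w => ((hop _ (main w).2.1).1).sdiff isClosed_closure
  have hmem : ∀ w, a w ∈ Wo w := by
    intro w
    refine ⟨(main w).2.2.2.1, fun hcl => ?_⟩
    have hsub : q '' Ioi w ⊆ P := by
      rintro _ ⟨v, _, rfl⟩; exact (main v).2.1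
    have h1 : (⋃ v ∈ Ioi w, (q v).1) = ⋃ p ∈ q '' Ioi w, p.1 := by
      rw [Set.biUnion_image]
    have h2 := hc (q '' Ioi w) hsub (by rw [← h1]; exact hcl)
    rw [Set.biUnion_image] at h2
    obtain ⟨v, hv, hv2⟩ := Set.mem_iUnion₂.mp h2
    exact (main v).2.2.2.2 w hv hv2
  have hdisj : ∀ v w : W, v < w → Disjoint (Wo v) (Wo w) := by
    intro v w hvw
    rw [Set.disjoint_left]
    rintro z ⟨_, hz2⟩ ⟨hz3, _⟩
    exact hz2 (subset_closure (Set.mem_biUnion hvw hz3))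
  have hanotin : ∀ v w : W, v ≠ w → a w ∉ Wo v := by
    intro v w hne hmem'
    rcases lt_or_gt_of_ne hne with hlt | hgt
    · exact hmem'.2 (subset_closure (Set.mem_biUnion hlt (main w).2.2.2.1))
    · exact (main v).2.2.2.2 w hgt ((hop _ (main v).2.1).2 hmem'.1)
  have hinj : Function.Injective Wo := by
    intro v w hvw
    by_contra hne
    have := hmem w
    rw [← hvw] at this
    exact hanotin v w hne this
  have hC := hcell (Set.range Wo)
    (by rintro _ ⟨w, rfl⟩; exact ⟨hopen w, ⟨a w, hmem w⟩⟩)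
    (by
      rintro _ ⟨v, rfl⟩ _ ⟨w, rfl⟩ hne
      have hvw : v ≠ w := fun e => hne (by rw [e])
      rcases lt_or_gt_of_ne hvw with h | h
      · exact hdisj v w h
      · exact (hdisj w v h).symm)
  have : #(Set.range Wo) = Order.succ κ := by
    rw [Cardinal.mk_range_eq _ hinj, Cardinal.mk_toType, Cardinal.card_ord]
  rw [this] at hC
  exact absurd hC (not_le.mpr (Order.lt_succ κ))

/-- If `X` is a σ-m₃-space, then its tightness is at most its cellularity: any infinite
cardinal bounding the cellularity of `X` bounds its tightness. -/
theorem sigmaM3_tightness_le_cellularity {X : Type u} [TopologicalSpace X]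
    (h : ∀ x : X, SigmaM3At x) (κ : Cardinal.{u}) (hκ : ℵ₀ ≤ κ)
    (hcell : ∀ C : Set (Set X), (∀ V ∈ C, IsOpen V ∧ V.Nonempty) →
      C.PairwiseDisjoint id → #C ≤ κ) :
    ∀ (x : X) (A : Set X), x ∈ closure A → ∃ B ⊆ A, #B ≤ κ ∧ x ∈ closure B := by
  intro x A hxA
  obtain ⟨P, hc, hop, hbase⟩ := h x
  choose B hBA hBκ hBmeet using fun n =>
    key_lemma κ hκ hcell (P n) (hc n) (hop n) x A hxA
  refine ⟨⋃ n, B n, Set.iUnion_subset hBA, ?_, ?_⟩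
  · have heq : (⋃ n, B n) = ⋃ i : ULift.{u} ℕ, B i.down := by
      ext z
      simp only [Set.mem_iUnion]
      exact ⟨fun ⟨n, hn⟩ => ⟨⟨n⟩, hn⟩, fun ⟨i, hi⟩ => ⟨i.down, hi⟩⟩
    rw [heq]
    calc #(⋃ i : ULift.{u} ℕ, B i.down)
        ≤ #(ULift.{u} ℕ) * ⨆ i : ULift.{u} ℕ, #(B i.down) := Cardinal.mk_iUnion_le _
      _ ≤ ℵ₀ * κ := by
          rw [Cardinal.mk_denumerable]
          exact mul_le_mul' le_rfl (ciSup_le fun i => hBκ i.down)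
      _ = κ := Cardinal.aleph0_mul_eq hκ
  · rw [mem_closure_iff]
    intro U hU hxU
    obtain ⟨n, p, hpP, hxp, hpU⟩ := hbase U hU hxU
    obtain ⟨b, hbB, hbp⟩ := hBmeet n p hpP hxp
    exact ⟨b, hpU hbp, Set.mem_iUnion.mpr ⟨n, hbB⟩⟩
end

section
/- Let X be a separable space with the Baire property (every countable intersection of dense open sets is dense), and suppose X has a σ-cushioned local pairbase at a point x. Then X has countable π-character at x: there exists a countable family 𝒰 of non-empty open sets such that every open neighborhood of x contains a member of 𝒰. -/
open Set Topology Cardinal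

/-- A separable Baire space which is σ-m₃ at a point `x` has countable π-character at `x`. -/
theorem separable_baire_sigmaM3_pi_character {X : Type*} [TopologicalSpace X]
    [TopologicalSpace.SeparableSpace X] [BaireSpace X]
    (x : X) (h : SigmaM3At x) :
    ∃ 𝒰 : Set (Set X), 𝒰.Countable ∧ (∀ V ∈ 𝒰, IsOpen V ∧ V.Nonempty) ∧
      ∀ U : Set X, IsOpen U → x ∈ U → ∃ V ∈ 𝒰, V ⊆ U := by
  obtain ⟨P, hcush, hpo, hbase⟩ := h
  obtain ⟨D, hDc, hDd⟩ := TopologicalSpace.exists_countable_dense X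
  -- The basic sets
  set C : ℕ → X → Set X := fun n d => ⋂ q ∈ P n, ⋂ (_ : d ∈ q.1), q.2 with hC
  refine ⟨{V | ∃ n : ℕ, ∃ d ∈ D, V = interior (closure (C n d)) ∧ V.Nonempty},
    ?_, ?_, ?_⟩
  · -- countability
    have : {V | ∃ n : ℕ, ∃ d ∈ D, V = interior (closure (C n d)) ∧ V.Nonempty} ⊆
        (fun nd : ℕ × X => interior (closure (C nd.1 nd.2))) '' ((univ : Set ℕ) ×ˢ D) := by
      rintro V ⟨n, d, hd, rfl, -⟩
      exact ⟨(n, d), ⟨mem_univ _, hd⟩, rfl⟩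
    exact (((countable_univ).prod hDc).image _).mono this
  · rintro V ⟨n, d, hd, rfl, hne⟩
    exact ⟨isOpen_interior, hne⟩
  · intro U hU hxU
    obtain ⟨n, p, hp, hxp, hpU⟩ := hbase U hU hxU
    obtain ⟨m, q, hq, hxq, hqp⟩ := hbase p.1 (hpo n p hp).1 hxp
    -- key covering claim: q.1 is covered by the closures of the C m d, d ∈ D ∩ q.1
    have key : ∀ z ∈ q.1, ∃ d ∈ D ∩ q.1, z ∈ C m d := by
      intro z hz
      set P' : Set (Set X × Set X) := {r ∈ P m | z ∉ r.2} with hP'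
      have hzF : z ∉ closure (⋃ r ∈ P', r.1) := by
        intro hmem
        have := hcush m P' (fun r hr => hr.1) hmem
        simp only [mem_iUnion] at this
        obtain ⟨r, hr, hzr⟩ := this
        exact hr.2 hzr
      have hopen : IsOpen ((closure (⋃ r ∈ P', r.1))ᶜ ∩ q.1) :=
        isClosed_closure.isOpen_compl.inter (hpo m q hq).1
      have hzin : z ∈ (closure (⋃ r ∈ P', r.1))ᶜ ∩ q.1 := ⟨hzF, hz⟩
      obtain ⟨d, hdD, hdF, hdq⟩ := hDd.exists_mem_open hopen ⟨z, hzin⟩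
      refine ⟨d, ⟨hdD, hdq⟩, ?_⟩
      simp only [hC, mem_iInter]
      intro r hr hdr
      by_contra hzr
      exact hdF (subset_closure (mem_iUnion₂.2 ⟨r, ⟨hr, hzr⟩, hdr⟩))
    -- Baire argument
    by_contra hcon
    push_neg at hcon
    have hmeag : IsMeagre (⋃ d ∈ D ∩ q.1, closure (C m d)) := by
      rw [isMeagre_iff_countable_union_isNowhereDense]
      refine ⟨(fun d => closure (C m d)) '' (D ∩ q.1), ?_, (hDc.mono inter_subset_left).image _, ?_⟩
      · rintro t ⟨d, hd, rfl⟩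
        have hCsub : C m d ⊆ q.2 := by
          intro y hy
          simp only [hC, mem_iInter] at hy
          exact hy q hq hd.2
        have hsub : interior (closure (C m d)) ⊆ U := by
          have h1 : closure (C m d) ⊆ closure q.2 := closure_mono hCsub
          have h2 : closure q.2 ⊆ closure p.1 := closure_mono hqp
          have h3 : closure p.1 ⊆ p.2 := by
            have := hcush n {p} (by simpa using hp)
            simpa using this
          exact interior_subset.trans (h1.trans (h2.trans (h3.trans hpU)))
        rw [IsNowhereDense, closure_closure]
        by_contra hne
        rw [← ne_eq, ← nonempty_iff_ne_empty] at hne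
        exact absurd hsub (hcon _ ⟨m, d, hd.1, rfl, hne⟩)
      · intro y hy
        simp only [mem_iUnion] at hy
        obtain ⟨d, hd, hyd⟩ := hy
        exact ⟨closure (C m d), ⟨d, hd, rfl⟩, hyd⟩
    -- a nonempty open set can't be meagre in a Baire space
    have hdense : Dense (⋃ d ∈ D ∩ q.1, closure (C m d))ᶜ := dense_of_mem_residual hmeag
    have hint : interior (⋃ d ∈ D ∩ q.1, closure (C m d)) = ∅ :=
      interior_eq_empty_iff_dense_compl.2 hdense
    have hq1sub : q.1 ⊆ ⋃ d ∈ D ∩ q.1, closure (C m d) := by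
      intro z hz
      obtain ⟨d, hd, hdz⟩ := key z hz
      exact mem_iUnion₂.2 ⟨d, hd, subset_closure hdz⟩
    have : x ∈ interior (⋃ d ∈ D ∩ q.1, closure (C m d)) :=
      interior_maximal hq1sub (hpo m q hq).1 hxq
    rw [hint] at this
    exact this
end

section
/- If G is a separable topological group with the Baire property which is a σ-m₃-space (every point has a σ-cushioned local pairbase), then G is metrizable. -/
open Set Topology Cardinal

open Filter Pointwise Uniformity in
/-- A separable topological group with the Baire property which is a σ-m₃-space
is metrizable. -/
theorem separable_baire_sigmaM3_group_metrizable {G : Type*} [Group G]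
    [TopologicalSpace G] [IsTopologicalGroup G] [T1Space G]
    [TopologicalSpace.SeparableSpace G] [BaireSpace G]
    (h : ∀ x : G, SigmaM3At x) :
    TopologicalSpace.MetrizableSpace G := by
  classical
  have hne : Nonempty G := ⟨1⟩
  obtain ⟨P, hcush, hpo, hloc⟩ := h 1
  set d : ℕ → G := TopologicalSpace.denseSeq G with hd
  have hdense : DenseRange d := TopologicalSpace.denseRange_denseSeq G
  set S : ℕ × ℕ → Set G := fun i => ⋂ q ∈ {q ∈ P i.1 | d i.2 ∈ q.1}, q.2 with hS
  set V : ℕ × ℕ → Set G := fun i => interior (closure (S i)) with hV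
  have hVopen : ∀ i, IsOpen (V i) := fun i => isOpen_interior
  -- singleton cushioning: closure of the first coordinate is inside the second
  have hclos : ∀ n, ∀ p ∈ P n, closure p.1 ⊆ p.2 := by
    intro n p hp
    have := hcush n {p} (by simpa using hp)
    simpa using this
  -- the countable family V is a local π-base at 1
  have key : ∀ U : Set G, IsOpen U → (1 : G) ∈ U → ∃ i, (V i).Nonempty ∧ V i ⊆ U := by
    intro U hU h1U
    obtain ⟨n, p, hpP, hp1, hp2⟩ := hloc U hU h1U
    have hp1open : IsOpen p.1 := (hpo n p hpP).1
    obtain ⟨m, q, hqP, hq1, hq2⟩ := hloc p.1 hp1open hp1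
    have hq1open : IsOpen q.1 := (hpo m q hqP).1
    -- every point of q.1 lies in some S (m, l) with d l ∈ q.1
    have cover : ∀ y ∈ q.1, ∃ l, d l ∈ q.1 ∧ y ∈ S (m, l) := by
      intro y hy
      set B : Set G := ⋃ r ∈ {r ∈ P m | y ∉ r.2}, r.1 with hB
      have hyO : y ∉ closure B := by
        intro hyc
        have h2 := hcush m {r ∈ P m | y ∉ r.2} (sep_subset _ _) hyc
        simp only [mem_iUnion, mem_sep_iff] at h2
        obtain ⟨r, ⟨_, hyr⟩, hyr2⟩ := h2
        exact hyr hyr2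
      have hOopen : IsOpen (closure B)ᶜ := isClosed_closure.isOpen_compl
      have hne' : ((closure B)ᶜ ∩ q.1).Nonempty := ⟨y, hyO, hy⟩
      obtain ⟨l, hlO, hlq⟩ := hdense.exists_mem_open (hOopen.inter hq1open) hne'
      refine ⟨l, hlq, ?_⟩
      simp only [hS, mem_iInter₂, mem_sep_iff]
      rintro r ⟨hrP, hdl⟩
      by_contra hyr
      exact hlO (subset_closure (mem_iUnion₂.2 ⟨r, ⟨hrP, hyr⟩, hdl⟩))
    -- Baire category argument inside q.1
    set F : Option ℕ → Set G := fun o =>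
      match o with
      | none => q.1ᶜ
      | some l => if d l ∈ q.1 then closure (S (m, l)) else q.1ᶜ
    have hFclosed : ∀ o, IsClosed (F o) := by
      rintro (_ | l)
      · exact hq1open.isClosed_compl
      · by_cases hl : d l ∈ q.1 <;> simp only [F, hl, if_true, if_false]
        · exact isClosed_closure
        · exact hq1open.isClosed_compl
    have hFunion : ⋃ o, F o = Set.univ := by
      ext y
      simp only [mem_iUnion, Set.mem_univ, iff_true]
      by_cases hy : y ∈ q.1
      · obtain ⟨l, hlq, hyS⟩ := cover y hy
        exact ⟨some l, by simp only [F, hlq, if_true]; exact subset_closure hyS⟩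
      · exact ⟨none, hy⟩
    have hdenseI : Dense (⋃ o, interior (F o)) :=
      dense_iUnion_interior_of_closed hFclosed hFunion
    obtain ⟨z, hz1, hz2⟩ := hdenseI.exists_mem_open hq1open ⟨1, hq1⟩
    simp only [mem_iUnion] at hz1
    obtain ⟨o, hzo⟩ := hz1
    match o with
    | none =>
      simp only [F] at hzo
      exact absurd hz2 (interior_subset hzo)
    | some l =>
      by_cases hl : d l ∈ q.1
      · simp only [F, hl, if_true] at hzo
        refine ⟨(m, l), ⟨z, hzo⟩, ?_⟩
        have hSq : S (m, l) ⊆ q.2 := iInter₂_subset q ⟨hqP, hl⟩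
        have hVU : V (m, l) ⊆ U := by
          refine interior_subset.trans ?_
          refine (closure_mono (hSq.trans hq2)).trans ?_
          exact (hclos n p hpP).trans hp2
        exact hVU
      · simp only [F, hl, if_false] at hzo
        exact absurd hz2 (interior_subset hzo)
  -- split lemma for neighborhoods of 1
  have hsplit : ∀ s ∈ 𝓝 (1 : G), ∃ A : Set G, IsOpen A ∧ (1 : G) ∈ A ∧ A⁻¹ * A ⊆ s := by
    intro s hs
    obtain ⟨B, hBopen, hB1, hBB⟩ := exists_open_nhds_one_mul_subset hs
    refine ⟨B ∩ B⁻¹, hBopen.inter hBopen.inv, ⟨hB1, by simpa using hB1⟩, ?_⟩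
    have h1 : (B ∩ B⁻¹)⁻¹ ⊆ B := by
      intro x hx
      simp only [Set.mem_inv, Set.mem_inter_iff] at hx
      simpa using hx.2
    have h2 : B ∩ B⁻¹ ⊆ B := inter_subset_left
    exact (Set.mul_subset_mul h1 h2).trans hBB
  -- countable neighborhood basis at 1
  set W : ℕ × ℕ → Set G := fun i => if (V i).Nonempty then (V i)⁻¹ * V i else Set.univ with hW
  have hWnhds : ∀ i, W i ∈ 𝓝 (1 : G) := by
    intro i
    by_cases hne' : (V i).Nonempty
    · obtain ⟨v, hv⟩ := hne'
      have hpos : (V i).Nonempty := ⟨v, hv⟩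
      have hopen : IsOpen ((V i)⁻¹ * V i) := (hVopen i).mul_left
      have hmem : (1 : G) ∈ (V i)⁻¹ * V i := by
        have := Set.mul_mem_mul (Set.inv_mem_inv.2 hv) hv
        simpa using this
      have hWi : W i = (V i)⁻¹ * V i := by
        simp only [hW]
        rw [if_pos hpos]
      rw [hWi]
      exact hopen.mem_nhds hmem
    · simp only [hW, if_neg hne']
      exact Filter.univ_mem
  have hbasis : (𝓝 (1 : G)).HasBasis (fun _ : ℕ × ℕ => True) W := by
    refine ⟨fun s => ⟨fun hs => ?_, ?_⟩⟩
    · obtain ⟨A, hAo, hA1, hAs⟩ := hsplit s hs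
      obtain ⟨i, hiNe, hiSub⟩ := key A hAo hA1
      refine ⟨i, trivial, ?_⟩
      rw [hW]
      simp only [if_pos hiNe]
      exact (Set.mul_subset_mul (Set.inv_subset_inv.2 hiSub) hiSub).trans hAs
    · rintro ⟨i, -, hsub⟩
      exact mem_of_superset (hWnhds i) hsub
  haveI : (𝓝 (1 : G)).IsCountablyGenerated := hbasis.isCountablyGenerated
  letI u : UniformSpace G := IsTopologicalGroup.rightUniformSpace G
  haveI : (𝓤 G).IsCountablyGenerated := by
    rw [uniformity_eq_comap_nhds_one']
    exact Filter.comap.isCountablyGenerated _ _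
  exact UniformSpace.metrizableSpace
end
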